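/- Let n ≥ 1 be an integer, let M̄ ≥ 1, let b₁, …, bₙ > 0 and e₁, …, eₙ > 0 be real numbers satisfying bᵢ > eⱼ for all i, j ∈ {1, …, n}, and let p_max > 0. Consider maximizing F(p, q) = Σᵢ₌₁ⁿ [ log₂(1 + M̄·bᵢ·pᵢ) + log₂(1 + eᵢ·qᵢ / (1 + eᵢ·pᵢ)) ] over all pᵢ ≥ 0, qᵢ ≥ 0 with Σᵢ (pᵢ + qᵢ) ≤ p_max. Then (i) a global maximizer exists, and (ii) every global maximizer (p*, q*) satisfies qᵢ* = 0 for all i = 1, …, n. -/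
import Mathlib


open Finset

lemma noma_key_ineq (Mbar B E P Q : ℝ) (hM : 1 ≤ Mbar) (hB : 0 < B) (hE : 0 < E)
    (hEB : E < B) (hP : 0 ≤ P) (hQ : 0 < Q) :
    Real.logb 2 (1 + Mbar * B * P) + Real.logb 2 (1 + E * Q / (1 + E * P)) <
      Real.logb 2 (1 + Mbar * B * (P + Q)) := by
  have hD : 0 < 1 + E * P := by positivity
  have hA : 0 < 1 + Mbar * B * P := by
    nlinarith [mul_nonneg (mul_nonneg (le_trans zero_le_one hM) hB.le) hP]
  have h2 : 0 < 1 + E * Q / (1 + E * P) := by positivity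
  rw [← Real.logb_mul (ne_of_gt hA) (ne_of_gt h2)]
  apply Real.logb_lt_logb one_lt_two (by positivity)
  have hMB : E < Mbar * B := lt_of_lt_of_le hEB (le_mul_of_one_le_left hB.le hM)
  have expand : (1 + Mbar * B * P) * (1 + E * Q / (1 + E * P)) =
      (1 + Mbar * B * P) + (1 + Mbar * B * P) * (E * Q) / (1 + E * P) := by ring
  rw [expand]
  have hlt : (1 + Mbar * B * P) * (E * Q) / (1 + E * P) < Mbar * B * Q := by
    rw [div_lt_iff₀ hD]
    nlinarith [mul_lt_mul_of_pos_right hMB hQ]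
  nlinarith

/-- Lemma 1: the NOMA sum-rate upper bound
`F(p, q) = Σᵢ [log₂(1 + M̄·bᵢ·pᵢ) + log₂(1 + eᵢ·qᵢ/(1 + eᵢ·pᵢ))]`
over the feasible set `{(p,q) : p ≥ 0, q ≥ 0, Σᵢ (pᵢ + qᵢ) ≤ p_max}`
has a global maximizer, and every global maximizer satisfies `q = 0`. -/
theorem noma_sum_rate_maximizer_zero_edge_power
    (n : ℕ) (hn : 1 ≤ n) (Mbar : ℝ) (hM : 1 ≤ Mbar)
    (b e : Fin n → ℝ) (hb : ∀ i, 0 < b i) (he : ∀ i, 0 < e i)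
    (hbe : ∀ i j, e j < b i) (pmax : ℝ) (hpmax : 0 < pmax)
    (F : (Fin n → ℝ) → (Fin n → ℝ) → ℝ)
    (hF : ∀ p q, F p q =
      ∑ i, (Real.logb 2 (1 + Mbar * b i * p i) +
            Real.logb 2 (1 + e i * q i / (1 + e i * p i))))
    (S : Set ((Fin n → ℝ) × (Fin n → ℝ)))
    (hS : S = {pq | (∀ i, 0 ≤ pq.1 i) ∧ (∀ i, 0 ≤ pq.2 i) ∧
                    ∑ i, (pq.1 i + pq.2 i) ≤ pmax}) :
    (∃ x ∈ S, ∀ y ∈ S, F y.1 y.2 ≤ F x.1 x.2) ∧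
    (∀ x ∈ S, (∀ y ∈ S, F y.1 y.2 ≤ F x.1 x.2) → ∀ i, x.2 i = 0) := by
  constructor
  · -- existence of a maximizer
    have hbound : ∀ x ∈ S, ∀ i, x.1 i ≤ pmax ∧ x.2 i ≤ pmax := by
      intro x hx i
      rw [hS] at hx
      obtain ⟨h1, h2, h3⟩ := hx
      have hsingle : x.1 i + x.2 i ≤ ∑ j, (x.1 j + x.2 j) :=
        Finset.single_le_sum (fun j _ => add_nonneg (h1 j) (h2 j)) (Finset.mem_univ i)
      constructor <;> nlinarith [h1 i, h2 i]
    have hsub : S ⊆ (Set.univ.pi fun _ : Fin n => Set.Icc (0:ℝ) pmax) ×ˢ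
        (Set.univ.pi fun _ : Fin n => Set.Icc (0:ℝ) pmax) := by
      intro x hx
      have hx' := hx
      rw [hS] at hx'
      exact ⟨fun i _ => ⟨hx'.1 i, (hbound x hx i).1⟩, fun i _ => ⟨hx'.2.1 i, (hbound x hx i).2⟩⟩
    have hKcomp : IsCompact ((Set.univ.pi fun _ : Fin n => Set.Icc (0:ℝ) pmax) ×ˢ
        (Set.univ.pi fun _ : Fin n => Set.Icc (0:ℝ) pmax)) :=
      (isCompact_univ_pi fun _ => isCompact_Icc).prod
        (isCompact_univ_pi fun _ => isCompact_Icc)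
    have hclosed : IsClosed S := by
      rw [hS]
      have h1 : IsClosed {pq : (Fin n → ℝ) × (Fin n → ℝ) | ∀ i, 0 ≤ pq.1 i} := by
        have heq : {pq : (Fin n → ℝ) × (Fin n → ℝ) | ∀ i, 0 ≤ pq.1 i} =
            ⋂ i, {pq | 0 ≤ pq.1 i} := by ext x; simp
        rw [heq]
        exact isClosed_iInter fun i =>
          isClosed_le continuous_const ((continuous_apply i).comp continuous_fst)
      have h2 : IsClosed {pq : (Fin n → ℝ) × (Fin n → ℝ) | ∀ i, 0 ≤ pq.2 i} := by
        have heq : {pq : (Fin n → ℝ) × (Fin n → ℝ) | ∀ i, 0 ≤ pq.2 i} =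
            ⋂ i, {pq | 0 ≤ pq.2 i} := by ext x; simp
        rw [heq]
        exact isClosed_iInter fun i =>
          isClosed_le continuous_const ((continuous_apply i).comp continuous_snd)
      have h3 : IsClosed {pq : (Fin n → ℝ) × (Fin n → ℝ) | ∑ i, (pq.1 i + pq.2 i) ≤ pmax} :=
        isClosed_le (by
          apply continuous_finset_sum
          intro i _
          exact ((continuous_apply i).comp continuous_fst).add
            ((continuous_apply i).comp continuous_snd)) continuous_const
      exact h1.inter (h2.inter h3)
    have hScomp : IsCompact S := hKcomp.of_isClosed_subset hclosed hsub
    have hne : S.Nonempty := by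
      refine ⟨(fun _ => 0, fun _ => 0), ?_⟩
      rw [hS]
      refine ⟨fun i => le_refl 0, fun i => le_refl 0, ?_⟩
      simp [hpmax.le]
    have hcont : ContinuousOn (fun x : (Fin n → ℝ) × (Fin n → ℝ) => F x.1 x.2) S := by
      have hcg : ContinuousOn (fun x : (Fin n → ℝ) × (Fin n → ℝ) =>
          ∑ i, (Real.logb 2 (1 + Mbar * b i * x.1 i) +
            Real.logb 2 (1 + e i * x.2 i / (1 + e i * x.1 i)))) S := by
        apply continuousOn_finset_sum
        intro i _
        have hp1 : ∀ x ∈ S, (0:ℝ) < 1 + Mbar * b i * x.1 i := by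
          intro x hx
          rw [hS] at hx
          nlinarith [hx.1 i, (hb i).le, mul_nonneg (mul_nonneg (le_trans zero_le_one hM) (hb i).le) (hx.1 i)]
        have hp2 : ∀ x ∈ S, (0:ℝ) < 1 + e i * x.1 i := by
          intro x hx
          rw [hS] at hx
          nlinarith [mul_nonneg (he i).le (hx.1 i)]
        have hp3 : ∀ x ∈ S, (0:ℝ) < 1 + e i * x.2 i / (1 + e i * x.1 i) := by
          intro x hx
          have := hp2 x hx
          rw [hS] at hx
          have : 0 ≤ e i * x.2 i / (1 + e i * x.1 i) :=
            div_nonneg (mul_nonneg (he i).le (hx.2.1 i)) (by nlinarith [mul_nonneg (he i).le (hx.1 i)])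
          linarith
        apply ContinuousOn.add
        · simp only [Real.logb]
          apply ContinuousOn.div_const
          apply ContinuousOn.log
          · exact (continuous_const.add (continuous_const.mul
              ((continuous_apply i).comp continuous_fst))).continuousOn
          · intro x hx; exact ne_of_gt (hp1 x hx)
        · simp only [Real.logb]
          apply ContinuousOn.div_const
          apply ContinuousOn.log
          · apply ContinuousOn.add continuousOn_const
            apply ContinuousOn.div
            · exact (continuous_const.mul
                ((continuous_apply i).comp continuous_snd)).continuousOn
            · exact (continuous_const.add (continuous_const.mul
                ((continuous_apply i).comp continuous_fst))).continuousOn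
            · intro x hx; exact ne_of_gt (hp2 x hx)
          · intro x hx; exact ne_of_gt (hp3 x hx)
      exact hcg.congr fun x _ => hF x.1 x.2
    obtain ⟨x, hxS, hmax⟩ := hScomp.exists_isMaxOn hne hcont
    exact ⟨x, hxS, fun y hy => hmax hy⟩
  · -- every maximizer has q = 0
    intro x hxS hmax i
    by_contra hne0
    have hxS' := hxS
    rw [hS] at hxS'
    obtain ⟨hp, hq, hsum⟩ := hxS'
    have hqi : 0 < x.2 i := lt_of_le_of_ne (hq i) (Ne.symm hne0)
    set y : (Fin n → ℝ) × (Fin n → ℝ) :=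
      (Function.update x.1 i (x.1 i + x.2 i), Function.update x.2 i 0) with hy
    have hyS : y ∈ S := by
      rw [hS]
      refine ⟨?_, ?_, ?_⟩
      · intro j
        by_cases hji : j = i
        · subst hji; simp [hy, add_nonneg (hp j) (hq j)]
        · simp [hy, Function.update_of_ne hji, hp j]
      · intro j
        by_cases hji : j = i
        · subst hji; simp [hy]
        · simp [hy, Function.update_of_ne hji, hq j]
      · have heq : ∑ j, (y.1 j + y.2 j) = ∑ j, (x.1 j + x.2 j) := by
          apply Finset.sum_congr rfl
          intro j _
          by_cases hji : j = i
          · subst hji; simp [hy]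
          · simp [hy, Function.update_of_ne hji]
        rw [heq]; exact hsum
    have hlt : F x.1 x.2 < F y.1 y.2 := by
      rw [hF, hF]
      apply Finset.sum_lt_sum
      · intro j _
        by_cases hji : j = i
        · subst hji
          simp only [hy, Function.update_self]
          have h0 : e j * (0:ℝ) / (1 + e j * (x.1 j + x.2 j)) = 0 := by ring
          simp only [h0, add_zero, Real.logb_one]
          exact (noma_key_ineq Mbar (b j) (e j) (x.1 j) (x.2 j) hM (hb j) (he j)
            (hbe j j) (hp j) hqi).le
        · simp [hy, Function.update_of_ne hji]
      · refine ⟨i, Finset.mem_univ i, ?_⟩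
        simp only [hy, Function.update_self]
        have h0 : e i * (0:ℝ) / (1 + e i * (x.1 i + x.2 i)) = 0 := by ring
        simp only [h0, add_zero, Real.logb_one]
        exact noma_key_ineq Mbar (b i) (e i) (x.1 i) (x.2 i) hM (hb i) (he i)
          (hbe i i) (hp i) hqi
    exact absurd (hmax y hyS) (not_le.mpr hlt)
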